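/- Let ν₁ and ν₂ be probability measures on S, let d̂ be a probability mass function on S̃, and let ε ≥ 0, η ≥ 0, R_max ≥ 0, and H ≥ 0 be real numbers. Suppose R : S → ℝ is measurable with 0 ≤ R(s) ≤ R_max for all s ∈ S, R̃ : S̃ → ℝ satisfies R̃(s̃) ≥ 0 for all s̃ ∈ S̃, and R(s) = R̃(φ(s)) for all s ∈ S (the reward factors exactly through the abstraction). If D_KL(φ₊ν₁ ‖ d̂) ≤ ε and D_KL(d̂ ‖ φ₊ν₂) ≤ η, then H·∫ R dν₁ − H·∫ R dν₂ ≤ H·R_max·(√(2ε) + √(2η)). -/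

import Mathlib

open MeasureTheory Real
open scoped BigOperators

/-- A probability mass function on a finite type, as a real-valued function. -/
def IsPmf {T : Type*} [Fintype T] (p : T → ℝ) : Prop :=
  (∀ t, 0 ≤ p t) ∧ ∑ t, p t = 1

open Classical in
/-- Kullback–Leibler divergence between pmfs on a finite type, valued in `EReal`,
with conventions `0 · log 0 = 0` and `⊤` when absolute continuity fails. -/
noncomputable def klDiv {T : Type*} [Fintype T] (p q : T → ℝ) : EReal :=
  if ∀ t, q t = 0 → p t = 0 then ((∑ t, p t * Real.log (p t / q t) : ℝ) : EReal)
  else ⊤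

/-- Pushforward of a measure under `φ`, as a real-valued mass function on a finite type. -/
noncomputable def pushforward {S : Type*} [MeasurableSpace S] {T : Type*}
    (φ : S → T) (ν : Measure S) : T → ℝ :=
  fun t => (ν (φ ⁻¹' {t})).toReal

/-- Square root on `EReal`, sending `⊤` to `⊤`. -/
noncomputable def esqrt (x : EReal) : EReal :=
  if x = ⊤ then ⊤ else ((Real.sqrt x.toReal : ℝ) : EReal)

lemma pointwise_kl_aux (p q : ℝ) (hp : 0 ≤ p) (hq : 0 ≤ q) (h : q = 0 → p = 0) :
    (Real.sqrt p - Real.sqrt q)^2 ≤ p * Real.log (p / q) - p + q := by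
  rcases eq_or_lt_of_le hq with hq0 | hq0
  · have hp0 := h hq0.symm
    simp [← hq0, hp0]
  rcases eq_or_lt_of_le hp with hp0 | hp0
  · simp [← hp0, Real.sq_sqrt hq]
  · have hsp : 0 < Real.sqrt p := Real.sqrt_pos.2 hp0
    have hsq : 0 < Real.sqrt q := Real.sqrt_pos.2 hq0
    have hlog : Real.log (Real.sqrt q / Real.sqrt p) ≤ Real.sqrt q / Real.sqrt p - 1 :=
      Real.log_le_sub_one_of_pos (by positivity)
    have hlogeq : Real.log (p / q) = - 2 * Real.log (Real.sqrt q / Real.sqrt p) := by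
      rw [Real.log_div (ne_of_gt hsq) (ne_of_gt hsp), Real.log_sqrt hq, Real.log_sqrt hp,
        Real.log_div (ne_of_gt hp0) (ne_of_gt hq0)]
      ring
    have h1 : p * Real.log (p / q) ≥ p * (-2 * (Real.sqrt q / Real.sqrt p - 1)) := by
      rw [hlogeq]
      have := mul_le_mul_of_nonneg_left hlog hp
      nlinarith
    have hps : Real.sqrt p ^ 2 = p := Real.sq_sqrt hp
    have hqs : Real.sqrt q ^ 2 = q := Real.sq_sqrt hq
    have hdiv : p * (Real.sqrt q / Real.sqrt p) = Real.sqrt p * Real.sqrt q := by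
      field_simp
      nlinarith
    nlinarith

lemma pinsker_l1_aux {T : Type*} [Fintype T] (p q : T → ℝ) (hp : IsPmf p) (hq : IsPmf q)
    (hac : ∀ t, q t = 0 → p t = 0) (ε : ℝ)
    (hKL : ∑ t, p t * Real.log (p t / q t) ≤ ε) :
    ∑ t, |p t - q t| ≤ 2 * Real.sqrt ε := by
  set D := ∑ t, (Real.sqrt (p t) - Real.sqrt (q t))^2 with hD
  have hD0 : 0 ≤ D := Finset.sum_nonneg fun t _ => sq_nonneg _
  have hDle : D ≤ ε := by
    have h1 : D ≤ ∑ t, (p t * Real.log (p t / q t) - p t + q t) :=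
      Finset.sum_le_sum fun t _ => pointwise_kl_aux _ _ (hp.1 t) (hq.1 t) (hac t)
    have h2 : ∑ t, (p t * Real.log (p t / q t) - p t + q t)
        = (∑ t, p t * Real.log (p t / q t)) - (∑ t, p t) + ∑ t, q t := by
      rw [Finset.sum_add_distrib, Finset.sum_sub_distrib]
    rw [h2, hp.2, hq.2] at h1
    linarith
  have key : (∑ t, |p t - q t|)^2 ≤ D * ∑ t, (Real.sqrt (p t) + Real.sqrt (q t))^2 := by
    have heq : ∀ t : T, (Real.sqrt (p t) - Real.sqrt (q t)) * (Real.sqrt (p t) + Real.sqrt (q t))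
        = p t - q t := by
      intro t
      nlinarith [Real.sq_sqrt (hp.1 t), Real.sq_sqrt (hq.1 t)]
    have hsum : ∑ t, |p t - q t|
        = ∑ t, |Real.sqrt (p t) - Real.sqrt (q t)| * |Real.sqrt (p t) + Real.sqrt (q t)| :=
      Finset.sum_congr rfl fun t _ => by rw [← heq t, abs_mul]
    calc (∑ t, |p t - q t|)^2
        = (∑ t, |Real.sqrt (p t) - Real.sqrt (q t)| * |Real.sqrt (p t) + Real.sqrt (q t)|)^2 := by
          rw [hsum]
      _ ≤ (∑ t, |Real.sqrt (p t) - Real.sqrt (q t)|^2) *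
            (∑ t, |Real.sqrt (p t) + Real.sqrt (q t)|^2) :=
          Finset.sum_mul_sq_le_sq_mul_sq Finset.univ _ _
      _ = D * ∑ t, (Real.sqrt (p t) + Real.sqrt (q t))^2 := by
          simp [sq_abs, hD]
  have hsum4 : ∑ t, (Real.sqrt (p t) + Real.sqrt (q t))^2 ≤ 4 := by
    have h1 : ∀ t : T, (Real.sqrt (p t) + Real.sqrt (q t))^2 ≤ 2 * p t + 2 * q t := by
      intro t
      nlinarith [Real.sq_sqrt (hp.1 t), Real.sq_sqrt (hq.1 t),
        sq_nonneg (Real.sqrt (p t) - Real.sqrt (q t))]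
    calc ∑ t, (Real.sqrt (p t) + Real.sqrt (q t))^2 ≤ ∑ t, (2 * p t + 2 * q t) :=
          Finset.sum_le_sum fun t _ => h1 t
      _ = 4 := by rw [Finset.sum_add_distrib, ← Finset.mul_sum, ← Finset.mul_sum, hp.2, hq.2]; ring
  have habs0 : 0 ≤ ∑ t, |p t - q t| := Finset.sum_nonneg fun t _ => abs_nonneg _
  have h4 : (∑ t, |p t - q t|)^2 ≤ 4 * ε := by nlinarith
  calc ∑ t, |p t - q t| = Real.sqrt ((∑ t, |p t - q t|)^2) := (Real.sqrt_sq habs0).symm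
    _ ≤ Real.sqrt (4 * ε) := Real.sqrt_le_sqrt h4
    _ = 2 * Real.sqrt ε := by
        rw [show (4:ℝ) * ε = 2^2 * ε by ring, Real.sqrt_mul (by positivity),
          Real.sqrt_sq two_pos.le]

lemma weighted_bound_aux {T : Type*} [Fintype T] (p q f : T → ℝ) (hp : IsPmf p) (hq : IsPmf q)
    (hac : ∀ t, q t = 0 → p t = 0) (Rmax ε : ℝ) (hRmax : 0 ≤ Rmax) (hε : 0 ≤ ε)
    (hf0 : ∀ t, 0 ≤ f t) (hfB : ∀ t, 0 < p t → f t ≤ Rmax)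
    (hKL : ∑ t, p t * Real.log (p t / q t) ≤ ε) :
    ∑ t, f t * (p t - q t) ≤ Rmax * Real.sqrt (2 * ε) := by
  have hpt : ∀ t : T, f t * (p t - q t) ≤ Rmax / 2 * (|p t - q t| + (p t - q t)) := by
    intro t
    rcases le_or_gt (p t) (q t) with h | h
    · have h1 : f t * (p t - q t) ≤ 0 := mul_nonpos_of_nonneg_of_nonpos (hf0 t) (by linarith)
      have h2 : |p t - q t| + (p t - q t) = 0 := by rw [abs_of_nonpos (by linarith)]; ring
      nlinarith
    · have hpt0 : 0 < p t := lt_of_le_of_lt (hq.1 t) h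
      have hfb := hfB t hpt0
      rw [abs_of_pos (by linarith)]
      nlinarith
  calc ∑ t, f t * (p t - q t) ≤ ∑ t, Rmax / 2 * (|p t - q t| + (p t - q t)) :=
        Finset.sum_le_sum fun t _ => hpt t
    _ = Rmax / 2 * (∑ t, |p t - q t|) := by
        rw [← Finset.mul_sum, Finset.sum_add_distrib, Finset.sum_sub_distrib, hp.2, hq.2]
        ring_nf
    _ ≤ Rmax / 2 * (2 * Real.sqrt ε) := by
        have := pinsker_l1_aux p q hp hq hac ε hKL
        nlinarith [Real.sqrt_nonneg ε]
    _ ≤ Rmax * Real.sqrt (2 * ε) := by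
        have : Real.sqrt ε ≤ Real.sqrt (2 * ε) := Real.sqrt_le_sqrt (by linarith)
        nlinarith [Real.sqrt_nonneg ε]

lemma klDiv_le_coe_elim {T : Type*} [Fintype T] (p q : T → ℝ) (ε : ℝ)
    (h : klDiv p q ≤ (ε : EReal)) :
    (∀ t, q t = 0 → p t = 0) ∧ ∑ t, p t * Real.log (p t / q t) ≤ ε := by
  classical
  unfold klDiv at h
  by_cases hc : ∀ t, q t = 0 → p t = 0
  · rw [if_pos hc] at h
    exact ⟨hc, by exact_mod_cast h⟩
  · rw [if_neg hc] at h
    exact absurd (h.trans_lt (EReal.coe_lt_top ε)) (lt_irrefl _)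

lemma pushforward_isPmf {S : Type*} [MeasurableSpace S] {T : Type*} [Fintype T]
    [MeasurableSpace T] [MeasurableSingletonClass T]
    (φ : S → T) (hφ : Measurable φ) (ν : Measure S) [IsProbabilityMeasure ν] :
    IsPmf (pushforward φ ν) := by
  constructor
  · intro t; exact ENNReal.toReal_nonneg
  · have hsum : ∑ t : T, ν (φ ⁻¹' {t}) = ν (φ ⁻¹' (Finset.univ : Finset T)) :=
      sum_measure_preimage_singleton (Finset.univ : Finset T)
        (fun t _ => hφ (measurableSet_singleton t))
    have hsum' : ∑ t : T, ν (φ ⁻¹' {t}) = 1 := by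
      rw [hsum]; simp
    have : (∑ t : T, ν (φ ⁻¹' {t})).toReal = ∑ t : T, (ν (φ ⁻¹' {t})).toReal :=
      ENNReal.toReal_sum (fun t _ => measure_ne_top ν _)
    rw [hsum'] at this
    simpa [pushforward] using this.symm

lemma integral_eq_sum_pushforward {S : Type*} [MeasurableSpace S] {T : Type*} [Fintype T]
    [MeasurableSpace T] [MeasurableSingletonClass T]
    (φ : S → T) (hφ : Measurable φ) (ν : Measure S) [IsProbabilityMeasure ν]
    (g : T → ℝ) :
    ∫ s, g (φ s) ∂ν = ∑ t, g t * pushforward φ ν t := by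
  have hmeas : Measurable g := measurable_of_finite g
  haveI : IsProbabilityMeasure (ν.map φ) := Measure.isProbabilityMeasure_map hφ.aemeasurable
  rw [← integral_map hφ.aemeasurable hmeas.aestronglyMeasurable,
    integral_fintype (Integrable.of_finite)]
  refine Finset.sum_congr rfl fun t _ => ?_
  rw [measureReal_def, Measure.map_apply hφ (measurableSet_singleton t)]
  simp [pushforward, mul_comm]

/-- The case `α = 0` of Theorem 5.1, where the reward factors exactly through
the abstraction. -/
theorem visitation_suboptimality_bound_exact_abstraction
    {S : Type*} [MeasurableSpace S]
    {St : Type*} [Fintype St] [MeasurableSpace St] [MeasurableSingletonClass St]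
    (φ : S → St) (hφ : Measurable φ)
    (ν₁ ν₂ : Measure S) [IsProbabilityMeasure ν₁] [IsProbabilityMeasure ν₂]
    (dhat : St → ℝ) (hdhat : IsPmf dhat)
    (ε η Rmax H : ℝ)
    (hε : 0 ≤ ε) (hη : 0 ≤ η) (hRmax : 0 ≤ Rmax) (hH : 0 ≤ H)
    (R : S → ℝ) (hRmeas : Measurable R) (hR0 : ∀ s, 0 ≤ R s) (hRle : ∀ s, R s ≤ Rmax)
    (Rtil : St → ℝ) (hRtil0 : ∀ t, 0 ≤ Rtil t)
    (hfactor : ∀ s, R s = Rtil (φ s))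
    (hKL1 : klDiv (pushforward φ ν₁) dhat ≤ (ε : EReal))
    (hKL2 : klDiv dhat (pushforward φ ν₂) ≤ (η : EReal)) :
    H * ∫ s, R s ∂ν₁ - H * ∫ s, R s ∂ν₂ ≤
      H * Rmax * (Real.sqrt (2 * ε) + Real.sqrt (2 * η)) := by
  set p₁ := pushforward φ ν₁ with hp₁def
  set p₂ := pushforward φ ν₂ with hp₂def
  have hp₁ : IsPmf p₁ := pushforward_isPmf φ hφ ν₁
  have hp₂ : IsPmf p₂ := pushforward_isPmf φ hφ ν₂
  obtain ⟨hac₁, hkl₁⟩ := klDiv_le_coe_elim p₁ dhat ε hKL1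
  obtain ⟨hac₂, hkl₂⟩ := klDiv_le_coe_elim dhat p₂ η hKL2
  -- If a pushforward mass is positive, the fiber is nonempty, so Rtil ≤ Rmax there.
  have hfiber : ∀ ν : Measure S, ∀ t : St, (ν (φ ⁻¹' {t})).toReal ≠ 0 → Rtil t ≤ Rmax := by
    intro ν t ht
    have hne : (φ ⁻¹' {t}).Nonempty := by
      by_contra hemp
      rw [Set.not_nonempty_iff_eq_empty] at hemp
      simp [hemp] at ht
    obtain ⟨s, hs⟩ := hne
    have : φ s = t := hs
    rw [← this, ← hfactor s]
    exact hRle s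
  have hfB₁ : ∀ t, 0 < p₁ t → Rtil t ≤ Rmax := fun t ht =>
    hfiber ν₁ t (ne_of_gt ht)
  have hfB₂ : ∀ t, 0 < dhat t → Rtil t ≤ Rmax := by
    intro t ht
    have hp2ne : p₂ t ≠ 0 := fun h0 => by
      have := hac₂ t h0; linarith
    exact hfiber ν₂ t hp2ne
  have hA : ∑ t, Rtil t * (p₁ t - dhat t) ≤ Rmax * Real.sqrt (2 * ε) :=
    weighted_bound_aux p₁ dhat Rtil hp₁ hdhat hac₁ Rmax ε hRmax hε hRtil0 hfB₁ hkl₁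
  have hB : ∑ t, Rtil t * (dhat t - p₂ t) ≤ Rmax * Real.sqrt (2 * η) :=
    weighted_bound_aux dhat p₂ Rtil hdhat hp₂ hac₂ Rmax η hRmax hη hRtil0 hfB₂ hkl₂
  have hint₁ : ∫ s, R s ∂ν₁ = ∑ t, Rtil t * p₁ t := by
    rw [show (fun s => R s) = fun s => Rtil (φ s) from funext hfactor]
    exact integral_eq_sum_pushforward φ hφ ν₁ Rtil
  have hint₂ : ∫ s, R s ∂ν₂ = ∑ t, Rtil t * p₂ t := by
    rw [show (fun s => R s) = fun s => Rtil (φ s) from funext hfactor]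
    exact integral_eq_sum_pushforward φ hφ ν₂ Rtil
  have hdiff : ∫ s, R s ∂ν₁ - ∫ s, R s ∂ν₂
      = (∑ t, Rtil t * (p₁ t - dhat t)) + ∑ t, Rtil t * (dhat t - p₂ t) := by
    rw [hint₁, hint₂, ← Finset.sum_add_distrib, ← Finset.sum_sub_distrib]
    exact Finset.sum_congr rfl fun t _ => by ring
  have hle : ∫ s, R s ∂ν₁ - ∫ s, R s ∂ν₂ ≤ Rmax * (Real.sqrt (2 * ε) + Real.sqrt (2 * η)) := by
    rw [hdiff]; nlinarith
  calc H * ∫ s, R s ∂ν₁ - H * ∫ s, R s ∂ν₂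
      = H * (∫ s, R s ∂ν₁ - ∫ s, R s ∂ν₂) := by ring
    _ ≤ H * (Rmax * (Real.sqrt (2 * ε) + Real.sqrt (2 * η))) :=
        mul_le_mul_of_nonneg_left hle hH
    _ = H * Rmax * (Real.sqrt (2 * ε) + Real.sqrt (2 * η)) := by ring
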